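/- Let x₁, …, x_{D−1} be distinct points in ℝ^d, let v₁, …, v_{D−1} ∈ ℝ^d be nonzero vectors, and let a_{j,k} ∈ ℝ and b_{j,k} ∈ ℝ^d (1 ≤ k < j ≤ D−1) be arbitrary. Then the (D−1) × |I_{2D−1}| matrix whose j-th row has entries v_jᵀ∇p_α(x_j) + Σ_{k<j} ( a_{j,k} p_α(x_k) + b_{j,k}ᵀ∇p_α(x_k) ), for α ranging over I_{2D−1}, has rank equal to D−1 (the number of its rows). In particular, the matrix H(x₁, v₁) arising from the first-order expansion in c of the derivative of the delay map of the perturbed system φ_c(x) = φ(x) + e₁·Σ_{α∈I_{2D−1}} c_α p_α(x) has rank D−1 whenever x₁, …, x_{D−1} are distinct. -/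

import Mathlib

def pMon {d : ℕ} (α : Fin d → ℕ) (z : Fin d → ℝ) : ℝ := ∏ i, z i ^ α i

open Finset MvPolynomial

lemma differentiable_pMon {d : ℕ} (α : Fin d → ℕ) : Differentiable ℝ (pMon α) := by
  intro y
  have h : ∀ i ∈ (Finset.univ : Finset (Fin d)),
      DifferentiableAt ℝ (fun z : Fin d → ℝ => z i ^ α i) y :=
    fun i _ => (((ContinuousLinearMap.proj i : (Fin d → ℝ) →L[ℝ] ℝ)).differentiable.differentiableAt).pow (α i)
  exact (HasFDerivAt.finset_prod (fun i hi => (h i hi).hasFDerivAt)).differentiableAt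

/-- The key linear functional. -/
noncomputable def Phi {d n : ℕ} (c : Fin n → ℝ) (x v : Fin n → (Fin d → ℝ))
    (a : Fin n → Fin n → ℝ) (b : Fin n → Fin n → (Fin d → ℝ))
    (f : (Fin d → ℝ) → ℝ) : ℝ :=
  ∑ j, c j * (fderiv ℝ f (x j) (v j) +
    ∑ k ∈ Finset.univ.filter (fun k : Fin n => k < j),
      (a j k * f (x k) + fderiv ℝ f (x k) (b j k)))

variable {d n : ℕ} {c : Fin n → ℝ} {x v : Fin n → (Fin d → ℝ)}
  {a : Fin n → Fin n → ℝ} {b : Fin n → Fin n → (Fin d → ℝ)}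

lemma Phi_zero : Phi c x v a b (fun _ => 0) = 0 := by
  unfold Phi
  have : (fun _ : Fin d → ℝ => (0 : ℝ)) = fun _ => (0 : ℝ) := rfl
  simp [fderiv_const]

lemma Phi_add {f g : (Fin d → ℝ) → ℝ} (hf : Differentiable ℝ f) (hg : Differentiable ℝ g) :
    Phi c x v a b (fun z => f z + g z) = Phi c x v a b f + Phi c x v a b g := by
  unfold Phi
  have hd : ∀ y : Fin d → ℝ, fderiv ℝ (fun z => f z + g z) y = fderiv ℝ f y + fderiv ℝ g y :=
    fun y => fderiv_add (hf y) (hg y)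
  rw [← Finset.sum_add_distrib]
  refine Finset.sum_congr rfl fun j _ => ?_
  have hin : ∑ k ∈ Finset.univ.filter (fun k : Fin n => k < j),
      (a j k * (f (x k) + g (x k)) +
        (fderiv ℝ f (x k) (b j k) + fderiv ℝ g (x k) (b j k))) =
      (∑ k ∈ Finset.univ.filter (fun k : Fin n => k < j),
        (a j k * f (x k) + fderiv ℝ f (x k) (b j k))) +
      ∑ k ∈ Finset.univ.filter (fun k : Fin n => k < j),
        (a j k * g (x k) + fderiv ℝ g (x k) (b j k)) := by
    rw [← Finset.sum_add_distrib]
    refine Finset.sum_congr rfl fun k _ => ?_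
    ring
  simp only [hd, ContinuousLinearMap.add_apply]
  rw [hin]
  ring

lemma Phi_smul {f : (Fin d → ℝ) → ℝ} (r : ℝ) (hf : Differentiable ℝ f) :
    Phi c x v a b (fun z => r * f z) = r * Phi c x v a b f := by
  unfold Phi
  have hd : ∀ y : Fin d → ℝ, fderiv ℝ (fun z => r * f z) y = r • fderiv ℝ f y :=
    fun y => fderiv_const_mul (hf y) r
  rw [Finset.mul_sum]
  refine Finset.sum_congr rfl fun j _ => ?_
  have hin : ∑ k ∈ Finset.univ.filter (fun k : Fin n => k < j),
      (a j k * (r * f (x k)) + r * fderiv ℝ f (x k) (b j k)) =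
      r * ∑ k ∈ Finset.univ.filter (fun k : Fin n => k < j),
        (a j k * f (x k) + fderiv ℝ f (x k) (b j k)) := by
    rw [Finset.mul_sum]
    refine Finset.sum_congr rfl fun k _ => ?_
    ring
  simp only [hd, ContinuousLinearMap.smul_apply, smul_eq_mul]
  rw [hin]
  ring

lemma Phi_finsum {ι : Type*} (T : Finset ι) (F : ι → (Fin d → ℝ) → ℝ)
    (h : ∀ t ∈ T, Differentiable ℝ (F t)) :
    Phi c x v a b (fun z => ∑ t ∈ T, F t z) = ∑ t ∈ T, Phi c x v a b (F t) := by
  classical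
  induction T using Finset.induction with
  | empty => simpa using (Phi_zero (c := c) (x := x) (v := v) (a := a) (b := b))
  | @insert t T hni ih =>
      have hfun : (fun z => ∑ s ∈ insert t T, F s z) =
          fun z => F t z + ∑ s ∈ T, F s z := by
        funext z; rw [Finset.sum_insert hni]
      rw [hfun, Phi_add (h t (Finset.mem_insert_self t T))
        (Differentiable.fun_sum fun s hs => h s (Finset.mem_insert_of_mem hs)),
        ih (fun s hs => h s (Finset.mem_insert_of_mem hs)), Finset.sum_insert hni]

theorem stmt11 (d D : ℕ) (x : Fin (D - 1) → (Fin d → ℝ)) (hx : Function.Injective x)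
    (v : Fin (D - 1) → (Fin d → ℝ)) (hv : ∀ j, v j ≠ 0)
    (a : Fin (D - 1) → Fin (D - 1) → ℝ)
    (b : Fin (D - 1) → Fin (D - 1) → (Fin d → ℝ)) :
    LinearIndependent ℝ (fun j : Fin (D - 1) =>
      fun α : {α : Fin d → ℕ // (∑ i, α i) ≤ 2 * D - 1} =>
        fderiv ℝ (pMon α.1) (x j) (v j) +
          ∑ k ∈ Finset.univ.filter (fun k : Fin (D - 1) => k < j),
            (a j k * pMon α.1 (x k) + fderiv ℝ (pMon α.1) (x k) (b j k))) := by
  classical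
  rw [Fintype.linearIndependent_iff]
  intro c hc
  have hrow : ∀ (α : Fin d → ℕ), (∑ i, α i) ≤ 2 * D - 1 →
      Phi c x v a b (pMon α) = 0 := by
    intro α hα
    have := congrFun hc ⟨α, hα⟩
    simpa [Phi, Finset.sum_apply, Pi.smul_apply, smul_eq_mul] using this
  -- main inductive step
  have main : ∀ j : Fin (D - 1), (∀ j', j < j' → c j' = 0) → c j = 0 := by
    intro j ih
    set filt := Finset.univ.filter (fun k : Fin (D - 1) => k < j) with hfilt
    set F : (Fin d → ℝ) → ℝ := fun z => ∑ i, v j i * (z i - x j i) with hF_def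
    set S : Fin (D - 1) → (Fin d → ℝ) → ℝ := fun k z => ∑ i, (z i - x k i) ^ 2 with hS_def
    set Q : (Fin d → ℝ) → ℝ := fun z => F z * ∏ k ∈ filt, S k z with hQ_def
    set q : MvPolynomial (Fin d) ℝ :=
      (∑ i, MvPolynomial.C (v j i) * (MvPolynomial.X i - MvPolynomial.C (x j i))) *
        ∏ k ∈ filt, (∑ i, (MvPolynomial.X i - MvPolynomial.C (x k i)) ^ 2) with hq_def
    -- degree bound
    have hD2 : 2 ≤ D := by
      have := j.isLt; omega
    have hdeg : q.totalDegree ≤ 2 * D - 1 := by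
      have h1 : (∑ i, MvPolynomial.C (v j i) *
          (MvPolynomial.X i - MvPolynomial.C (x j i))).totalDegree ≤ 1 := by
        refine totalDegree_finsetSum_le fun i _ => ?_
        refine le_trans (totalDegree_mul _ _) ?_
        rw [totalDegree_C]
        have : (MvPolynomial.X i - MvPolynomial.C (x j i) :
            MvPolynomial (Fin d) ℝ).totalDegree ≤ 1 := by
          rw [sub_eq_add_neg, ← MvPolynomial.C_neg]
          refine le_trans (totalDegree_add _ _) ?_
          simp [totalDegree_X, totalDegree_C]
        omega
      have h2 : (∏ k ∈ filt, (∑ i, (MvPolynomial.X i -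
          MvPolynomial.C (x k i)) ^ 2 : MvPolynomial (Fin d) ℝ)).totalDegree ≤
          2 * (D - 1) := by
        refine le_trans (totalDegree_finset_prod _ _) ?_
        have heach : ∀ k ∈ filt, (∑ i, (MvPolynomial.X i -
            MvPolynomial.C (x k i)) ^ 2 : MvPolynomial (Fin d) ℝ).totalDegree ≤ 2 := by
          intro k _
          refine totalDegree_finsetSum_le fun i _ => ?_
          refine le_trans (totalDegree_pow _ _) ?_
          have : (MvPolynomial.X i - MvPolynomial.C (x k i) :
              MvPolynomial (Fin d) ℝ).totalDegree ≤ 1 := by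
            rw [sub_eq_add_neg, ← MvPolynomial.C_neg]
            refine le_trans (totalDegree_add _ _) ?_
            simp [totalDegree_X, totalDegree_C]
          omega
        refine le_trans (Finset.sum_le_sum heach) ?_
        rw [Finset.sum_const, smul_eq_mul]
        have hcard : filt.card ≤ D - 1 := by
          refine le_trans (Finset.card_filter_le _ _) ?_
          simp
        omega
      refine le_trans (totalDegree_mul _ _) ?_
      omega
    -- Phi of q is zero via linearity
    have hPhiq : Phi c x v a b (fun z => MvPolynomial.eval z q) = 0 := by
      have heval : (fun z => MvPolynomial.eval z q) =
          fun z => ∑ s ∈ q.support, MvPolynomial.coeff s q * pMon (fun i => s i) z := by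
        funext z
        rw [MvPolynomial.eval_eq']
        rfl
      rw [heval, Phi_finsum q.support _
        (fun s _ => (differentiable_pMon (fun i => s i)).const_mul _)]
      refine Finset.sum_eq_zero fun s hs => ?_
      rw [Phi_smul _ (differentiable_pMon _)]
      have hsle : (∑ i, s i) ≤ 2 * D - 1 := by
        have h1 : (s.sum fun _ e => e) ≤ q.totalDegree := MvPolynomial.le_totalDegree hs
        have h2 : (s.sum fun _ e => e) = ∑ i, s i := Finsupp.sum_fintype _ _ (fun _ => rfl)
        omega
      rw [hrow _ hsle, mul_zero]
    -- eval of q equals Q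
    have hQeq : (fun z => MvPolynomial.eval z q) = Q := by
      funext z
      simp only [hq_def, hQ_def, hF_def, hS_def, map_sum, map_prod, map_mul, map_sub,
        map_pow, MvPolynomial.eval_C, MvPolynomial.eval_X]
    -- analytic facts
    set Lv : (Fin d → ℝ) →L[ℝ] ℝ :=
      ∑ i, v j i • (ContinuousLinearMap.proj i : (Fin d → ℝ) →L[ℝ] ℝ) with hLv_def
    have hF : ∀ y, HasFDerivAt F Lv y := by
      intro y
      have hterm : ∀ i : Fin d, HasFDerivAt (fun z : Fin d → ℝ => v j i * (z i - x j i))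
          (v j i • (ContinuousLinearMap.proj i : (Fin d → ℝ) →L[ℝ] ℝ)) y := by
        intro i
        have h1 : HasFDerivAt (fun z : Fin d → ℝ => z i)
            (ContinuousLinearMap.proj i : (Fin d → ℝ) →L[ℝ] ℝ) y :=
          (ContinuousLinearMap.proj i : (Fin d → ℝ) →L[ℝ] ℝ).hasFDerivAt
        have h2 := (h1.sub_const (x j i)).const_mul (v j i)
        simpa using h2
      exact HasFDerivAt.fun_sum fun i _ => hterm i
    have hS0 : ∀ k, HasFDerivAt (S k) (0 : (Fin d → ℝ) →L[ℝ] ℝ) (x k) := by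
      intro k
      have hterm : ∀ i : Fin d, HasFDerivAt (fun z : Fin d → ℝ => (z i - x k i) ^ 2)
          ((0 : (Fin d → ℝ) →L[ℝ] ℝ)) (x k) := by
        intro i
        have h1 : HasFDerivAt (fun z : Fin d → ℝ => z i)
            (ContinuousLinearMap.proj i : (Fin d → ℝ) →L[ℝ] ℝ) (x k) :=
          (ContinuousLinearMap.proj i : (Fin d → ℝ) →L[ℝ] ℝ).hasFDerivAt
        have h1s := h1.sub_const (x k i)
        have h2 := h1s.fun_mul h1s
        have h3 : (fun z : Fin d → ℝ => (z i - x k i) ^ 2) =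
            fun z => (z i - x k i) * (z i - x k i) := by
          funext z; ring
        rw [h3]
        simpa using h2
      have := HasFDerivAt.fun_sum fun i (_ : i ∈ Finset.univ) => hterm i
      simpa using this
    have hSval : ∀ k, S k (x k) = 0 := by
      intro k; simp [hS_def]
    have hSdiff : ∀ k, Differentiable ℝ (S k) := by
      intro k
      refine Differentiable.fun_sum fun i _ => ?_
      exact ((((ContinuousLinearMap.proj i : (Fin d → ℝ) →L[ℝ] ℝ)).differentiable).sub_const _).pow 2
    have hFdiff : Differentiable ℝ F := fun y => (hF y).differentiableAt
    have hPdiff : ∀ (u : Finset (Fin (D-1))) (y : Fin d → ℝ),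
        DifferentiableAt ℝ (fun z => ∏ k ∈ u, S k z) y := by
      intro u y
      exact (HasFDerivAt.finset_prod fun k (_ : k ∈ u) =>
        ((hSdiff k) y).hasFDerivAt).differentiableAt
    -- fact A: vanishing at x m for m < j
    have hA : ∀ m ∈ filt, Q (x m) = 0 ∧ HasFDerivAt Q (0 : (Fin d → ℝ) →L[ℝ] ℝ) (x m) := by
      intro m hm
      have hQR : Q = fun z => S m z * (F z * ∏ k ∈ filt.erase m, S k z) := by
        funext z
        simp only [hQ_def]
        rw [← Finset.mul_prod_erase filt (fun k => S k z) hm]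
        ring
      constructor
      · rw [hQR]; simp [hSval m]
      · rw [hQR]
        have hR : DifferentiableAt ℝ (fun z => F z * ∏ k ∈ filt.erase m, S k z) (x m) :=
          (hFdiff (x m)).mul (hPdiff _ _)
        have := (hS0 m).fun_mul hR.hasFDerivAt
        simpa [hSval m] using this
    -- fact B: derivative at x j
    have hF0 : F (x j) = 0 := by simp [hF_def]
    have hB : HasFDerivAt Q ((∏ k ∈ filt, S k (x j)) • Lv) (x j) := by
      have hP := (hPdiff filt (x j)).hasFDerivAt
      have := (hF (x j)).fun_mul hP
      simpa [hF0] using this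
    have hQxj : Q (x j) = 0 := by simp [hQ_def, hF0]
    -- positivity
    have hv2 : 0 < ∑ i, (v j i) ^ 2 := by
      obtain ⟨i, hi⟩ := Function.ne_iff.mp (hv j)
      refine Finset.sum_pos' (fun i _ => sq_nonneg _) ⟨i, Finset.mem_univ i, ?_⟩
      exact lt_of_le_of_ne (sq_nonneg _) (Ne.symm (pow_ne_zero 2 hi))
    have hprodpos : 0 < ∏ k ∈ filt, S k (x j) := by
      refine Finset.prod_pos fun k hk => ?_
      have hkj : k ≠ j := ne_of_lt (Finset.mem_filter.mp hk).2
      have hxx : x j ≠ x k := fun h => hkj (hx h.symm)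
      obtain ⟨i, hi⟩ := Function.ne_iff.mp hxx
      rw [hS_def]
      refine Finset.sum_pos' (fun i _ => sq_nonneg _) ⟨i, Finset.mem_univ i, ?_⟩
      exact lt_of_le_of_ne (sq_nonneg _) (Ne.symm (pow_ne_zero 2 (sub_ne_zero.mpr hi)))
    -- compute Phi Q
    have hLvv : Lv (v j) = ∑ i, (v j i) ^ 2 := by
      simp [hLv_def, ContinuousLinearMap.sum_apply, sq]
    have hPhiQ : Phi c x v a b Q =
        c j * ((∏ k ∈ filt, S k (x j)) * ∑ i, (v j i) ^ 2) := by
      unfold Phi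
      rw [Finset.sum_eq_single j]
      · have hfd : fderiv ℝ Q (x j) (v j) =
            (∏ k ∈ filt, S k (x j)) * ∑ i, (v j i) ^ 2 := by
          rw [hB.fderiv]
          simp [hLvv]
        have hz : ∀ k ∈ filt, a j k * Q (x k) + fderiv ℝ Q (x k) (b j k) = 0 := by
          intro k hk
          obtain ⟨h0, hD⟩ := hA k hk
          rw [h0, hD.fderiv]; simp
        rw [hfd, ← hfilt, Finset.sum_eq_zero hz, add_zero]
      · intro j'' _ hne
        rcases lt_or_gt_of_ne hne with hlt | hgt
        · have hm : j'' ∈ filt := by simp [hfilt, hlt]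
          obtain ⟨h0, hD⟩ := hA j'' hm
          have hz : ∀ k ∈ Finset.univ.filter (fun k : Fin (D-1) => k < j''),
              a j'' k * Q (x k) + fderiv ℝ Q (x k) (b j'' k) = 0 := by
            intro k hk
            have hk' : k ∈ filt := by
              simp only [hfilt, Finset.mem_filter, Finset.mem_univ, true_and] at hk ⊢
              exact hk.trans hlt
            obtain ⟨h0', hD'⟩ := hA k hk'
            rw [h0', hD'.fderiv]; simp
          rw [hD.fderiv, Finset.sum_eq_zero hz]
          simp
        · rw [ih j'' hgt]; ring
      · intro h; exact absurd (Finset.mem_univ j) h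
    -- conclude
    have hzero : c j * ((∏ k ∈ filt, S k (x j)) * ∑ i, (v j i) ^ 2) = 0 := by
      rw [← hPhiQ, ← hQeq]
      exact hPhiq
    have hne : (∏ k ∈ filt, S k (x j)) * ∑ i, (v j i) ^ 2 ≠ 0 :=
      ne_of_gt (mul_pos hprodpos hv2)
    exact (mul_eq_zero.mp hzero).resolve_right hne
  intro j
  exact (wellFounded_gt (α := Fin (D - 1))).induction j fun j' ihW =>
    main j' fun j'' h => ihW j'' h
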